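/- Fix an atom v of 𝓛ₙ. Let A₁ and A₂ be MR-subalgebras of 𝓛ₙ, let αᵢ be a minimal element of Aᵢ, and set Bᵢ = β_v[Aᵢ], aᵢ = min Bᵢ, and cᵢ = v ∨ αᵢ. Then A₁ ⊆ A₂ if and only if B₁ ⊆ B₂ and c₁ +_{a₁} c₂ ∈ B₂. -/

import Mathlib

@[ext] structure Cube (n : ℕ) where
  pos : Finset (Fin n)
  neg : Finset (Fin n)
  disj : Disjoint pos neg

namespace Cube
variable {n : ℕ}

instance : PartialOrder (Cube n) where
  le x y := y.pos ⊆ x.pos ∧ y.neg ⊆ x.neg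
  le_refl x := ⟨subset_rfl, subset_rfl⟩
  le_trans x y z h₁ h₂ := ⟨h₂.1.trans h₁.1, h₂.2.trans h₁.2⟩
  le_antisymm x y h₁ h₂ :=
    Cube.ext (subset_antisymm h₂.1 h₁.1) (subset_antisymm h₂.2 h₁.2)

instance : OrderTop (Cube n) where
  top := ⟨∅, ∅, by simp⟩
  le_top x := ⟨Finset.empty_subset _, Finset.empty_subset _⟩

instance : SemilatticeSup (Cube n) where
  sup x y := ⟨x.pos ∩ y.pos, x.neg ∩ y.neg,
    x.disj.mono Finset.inter_subset_left Finset.inter_subset_left⟩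
  le_sup_left x y := ⟨Finset.inter_subset_left, Finset.inter_subset_left⟩
  le_sup_right x y := ⟨Finset.inter_subset_right, Finset.inter_subset_right⟩
  sup_le x y z hx hy := ⟨Finset.subset_inter hx.1 hy.1, Finset.subset_inter hx.2 hy.2⟩

/-- The reflection `Δ(x, y)` of `y` through the centre of `x`. -/
def delta (x y : Cube n) : Cube n :=
  ⟨x.pos ∪ (y.neg \ x.neg), x.neg ∪ (y.pos \ x.pos), by
    simp only [Finset.disjoint_union_left, Finset.disjoint_union_right]
    refine ⟨⟨x.disj, Finset.sdiff_disjoint⟩, Finset.disjoint_sdiff, ?_⟩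
    exact y.disj.symm.mono Finset.sdiff_subset Finset.sdiff_subset⟩

lemma delta_le (x y : Cube n) : delta x y ≤ x :=
  ⟨Finset.subset_union_left, Finset.subset_union_left⟩

/-- The co-rank of a face of the `n`-cube. -/
def corank (x : Cube n) : ℕ := (x.pos ∪ x.neg).card

/-- The set of coatoms of `𝓛ₙ` lying above `a`. -/
def coatomsAbove (a : Cube n) : Set (Cube n) := {c | corank c = 1 ∧ a ≤ c}

/-- `A` is an MR-subalgebra of `𝓛ₙ`. -/
def IsMRSub (A : Set (Cube n)) : Prop :=
  ⊤ ∈ A ∧ (∀ x ∈ A, ∀ y ∈ A, x ⊔ y ∈ A) ∧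
    (∀ x ∈ A, ∀ y ∈ A, y ≤ x → delta x y ∈ A) ∧
    (∀ x ∈ A, ∀ y ∈ A, ∃ m ∈ A, IsGLB {x, delta (x ⊔ y) y} m)

/-- The coatoms of a subalgebra `A`: maximal elements of `A \ {⊤}`. -/
def coAt (A : Set (Cube n)) : Set (Cube n) :=
  {a | a ∈ A ∧ a ≠ ⊤ ∧ ∀ b ∈ A, b ≠ ⊤ → a ≤ b → b = a}

/-- The coatoms `a` of `A` with `|𝒞ₐ| = i`. -/
def typeSet (A : Set (Cube n)) (i : ℕ) : Set (Cube n) :=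
  {a | a ∈ coAt A ∧ (coatomsAbove a).ncard = i}

/-- An order automorphism of `𝓛ₙ` is a cubic automorphism when it preserves `Δ`. -/
def IsAut (φ : Cube n ≃o Cube n) : Prop :=
  ∀ x y : Cube n, y ≤ x → φ (delta x y) = delta (φ x) (φ y)

/-- The set of automorphisms of `𝓛ₙ`. -/
def AutSet (n : ℕ) : Set (Cube n ≃o Cube n) := {φ | IsAut φ}

/-- An automorphism of the subposet `A` preserving `Δ`. -/
def IsSubAut {A : Set (Cube n)} (ψ : A ≃o A) : Prop :=
  ∀ (x y : A), (y : Cube n) ≤ (x : Cube n) → ∀ h : delta ↑x ↑y ∈ A,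
    (ψ ⟨delta ↑x ↑y, h⟩ : Cube n) = delta ↑(ψ x) ↑(ψ y)

end Cube


open scoped symmDiff

namespace Cube

/-- `bsum x c d` is the symmetric difference `c +ₓ d` of `c ∨ x` and `d ∨ x`
computed in the Boolean lattice `[x, 𝟙]`. -/
def bsum {n : ℕ} (x c d : Cube n) : Cube n :=
  ⟨x.pos \ ((c.pos ∩ x.pos) ∆ (d.pos ∩ x.pos)),
   x.neg \ ((c.neg ∩ x.neg) ∆ (d.neg ∩ x.neg)),
   x.disj.mono Finset.sdiff_subset Finset.sdiff_subset⟩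

end Cube

namespace Cube

/-- `β_v(x) = (x ∨ v) ∧ (Δ(𝟙,x) ∨ v)`, computed explicitly in `𝓛ₙ`. -/
def betav {n : ℕ} (v x : Cube n) : Cube n :=
  ⟨(x.pos ∪ x.neg) ∩ v.pos, (x.pos ∪ x.neg) ∩ v.neg,
   v.disj.mono Finset.inter_subset_right Finset.inter_subset_right⟩

end Cube

namespace Cube
variable {n : ℕ}

lemma le_def' {x y : Cube n} : x ≤ y ↔ y.pos ⊆ x.pos ∧ y.neg ⊆ x.neg := Iff.rfl
lemma sup_pos' (x y : Cube n) : (x ⊔ y).pos = x.pos ∩ y.pos := rfl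
lemma sup_neg' (x y : Cube n) : (x ⊔ y).neg = x.neg ∩ y.neg := rfl
lemma top_pos' : (⊤ : Cube n).pos = ∅ := rfl
lemma top_neg' : (⊤ : Cube n).neg = ∅ := rfl

/-- support -/
def suppc (x : Cube n) : Finset (Fin n) := x.pos ∪ x.neg

/-- negation -/
def negc (x : Cube n) : Cube n := ⟨x.neg, x.pos, x.disj.symm⟩

lemma negc_negc (x : Cube n) : negc (negc x) = x := rfl

/-- composition x ∘ y -/
def compc (x y : Cube n) : Cube n :=
  ⟨x.pos ∪ (y.pos \ suppc x), x.neg ∪ (y.neg \ suppc x), by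
    have hx := x.disj
    have hy := y.disj
    rw [Finset.disjoint_left] at *
    intro a ha hb
    simp only [suppc, Finset.mem_union, Finset.mem_sdiff, Finset.mem_union] at ha hb
    tauto⟩

/-- separation set -/
def sepc (x y : Cube n) : Finset (Fin n) := (x.pos ∩ y.neg) ∪ (x.neg ∩ y.pos)

/-- the total sign vector obtained from α by flipping signs on D -/
def flipc (α : Cube n) (D : Finset (Fin n)) : Cube n :=
  ⟨(α.pos \ D) ∪ (α.neg ∩ D), (α.neg \ D) ∪ (α.pos ∩ D), by
    have hx := α.disj
    rw [Finset.disjoint_left] at *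
    intro a ha hb
    simp only [Finset.mem_union, Finset.mem_sdiff, Finset.mem_inter] at ha hb
    tauto⟩

lemma glb_compc (x y : Cube n) : IsGLB {x, delta (x ⊔ y) y} (compc x (negc y)) := by
  constructor
  · rintro z (rfl | rfl)
    · exact ⟨Finset.subset_union_left, Finset.subset_union_left⟩
    · constructor
      · intro i hi
        simp only [delta, sup_pos', sup_neg', compc, negc, suppc, Finset.mem_union,
          Finset.mem_sdiff, Finset.mem_inter] at hi ⊢
        tauto
      · intro i hi
        simp only [delta, sup_pos', sup_neg', compc, negc, suppc, Finset.mem_union,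
          Finset.mem_sdiff, Finset.mem_inter] at hi ⊢
        tauto
  · intro z hz
    have h1 : z ≤ x := hz (by simp)
    have h2 : z ≤ delta (x ⊔ y) y := hz (by simp)
    obtain ⟨h1p, h1n⟩ := h1
    obtain ⟨h2p, h2n⟩ := h2
    constructor
    · intro i hi
      simp only [compc, negc, suppc, Finset.mem_union, Finset.mem_sdiff] at hi
      rcases hi with hi | ⟨hi, hi2⟩
      · exact h1p hi
      · refine h2p ?_
        simp only [delta, sup_pos', sup_neg', Finset.mem_union, Finset.mem_sdiff,
          Finset.mem_inter]
        tauto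
    · intro i hi
      simp only [compc, negc, suppc, Finset.mem_union, Finset.mem_sdiff] at hi
      rcases hi with hi | ⟨hi, hi2⟩
      · exact h1n hi
      · refine h2n ?_
        simp only [delta, sup_pos', sup_neg', Finset.mem_union, Finset.mem_sdiff,
          Finset.mem_inter]
        tauto

section MR
variable {A : Set (Cube n)} (hA : IsMRSub A)

include hA

lemma mem_caret {x y : Cube n} (hx : x ∈ A) (hy : y ∈ A) : compc x (negc y) ∈ A := by
  obtain ⟨m, hm, hglb⟩ := hA.2.2.2 x hx y hy
  rwa [hglb.unique (glb_compc x y)] at hm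

lemma mem_negc {y : Cube n} (hy : y ∈ A) : negc y ∈ A := by
  have h := mem_caret hA hA.1 hy
  have : compc ⊤ (negc y) = negc y := by
    apply Cube.ext <;>
    · simp only [compc, negc, suppc, top_pos', top_neg']
      ext i
      simp
  rwa [this] at h

lemma mem_compc {x y : Cube n} (hx : x ∈ A) (hy : y ∈ A) : compc x y ∈ A := by
  have := mem_caret hA hx (mem_negc hA hy)
  rwa [negc_negc] at this

end MR

end Cube
namespace Cube
variable {n : ℕ}

lemma sepc_subset (x y : Cube n) : sepc x y ⊆ suppc x := by
  intro i hi
  simp only [sepc, suppc, Finset.mem_union, Finset.mem_inter] at hi ⊢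
  tauto

lemma suppc_compc (x y : Cube n) : suppc (compc x y) = suppc x ∪ suppc y := by
  ext i
  simp only [suppc, compc, Finset.mem_union, Finset.mem_sdiff]
  tauto

lemma suppc_flipc (α : Cube n) (D : Finset (Fin n)) : suppc (flipc α D) = suppc α := by
  ext i
  have hα : i ∈ α.pos → i ∉ α.neg := fun h => Finset.disjoint_left.mp α.disj h
  simp only [suppc, flipc, Finset.mem_union, Finset.mem_sdiff, Finset.mem_inter]
  tauto

lemma sepc_flipc (α : Cube n) {D : Finset (Fin n)} (hD : D ⊆ suppc α) :
    sepc (flipc α D) α = D := by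
  ext i
  have hα : i ∈ α.pos → i ∉ α.neg := fun h => Finset.disjoint_left.mp α.disj h
  have hDi : i ∈ D → i ∈ α.pos ∨ i ∈ α.neg := by
    intro h; have := hD h; simpa [suppc] using this
  simp only [sepc, flipc, Finset.mem_union, Finset.mem_sdiff, Finset.mem_inter]
  tauto

lemma flipc_empty (α : Cube n) : flipc α ∅ = α := by
  apply Cube.ext <;> · ext i; simp [flipc]

lemma flipc_supp (α : Cube n) : flipc α (suppc α) = negc α := by
  have hα := Finset.disjoint_left.mp α.disj
  apply Cube.ext <;>
  · ext i
    have hαi : i ∈ α.pos → i ∉ α.neg := fun h => hα h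
    simp only [flipc, negc, suppc, Finset.mem_union, Finset.mem_sdiff, Finset.mem_inter]
    tauto

/-- I1 -/
lemma compc_eq_flipc {x α : Cube n} (hsub : suppc x ⊆ suppc α) :
    compc x α = flipc α (sepc x α) := by
  apply Cube.ext <;>
  · ext i
    have hxi : i ∈ x.pos → i ∉ x.neg := fun h => Finset.disjoint_left.mp x.disj h
    have hαi : i ∈ α.pos → i ∉ α.neg := fun h => Finset.disjoint_left.mp α.disj h
    have h1 : i ∈ x.pos ∪ x.neg → i ∈ α.pos ∪ α.neg := fun h => hsub h
    simp only [Finset.mem_union] at h1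
    simp only [compc, flipc, sepc, suppc, Finset.mem_union, Finset.mem_sdiff,
      Finset.mem_inter]
    tauto

/-- I2 -/
lemma delta_compc_eq_flipc {x α : Cube n} (hsub : suppc x ⊆ suppc α) :
    delta x (compc x α) = flipc α (sepc x α ∪ (suppc α \ suppc x)) := by
  apply Cube.ext <;>
  · ext i
    have hxi : i ∈ x.pos → i ∉ x.neg := fun h => Finset.disjoint_left.mp x.disj h
    have hαi : i ∈ α.pos → i ∉ α.neg := fun h => Finset.disjoint_left.mp α.disj h
    have h1 : i ∈ x.pos ∪ x.neg → i ∈ α.pos ∪ α.neg := fun h => hsub h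
    simp only [Finset.mem_union] at h1
    simp only [delta, compc, flipc, sepc, suppc, Finset.mem_union, Finset.mem_sdiff,
      Finset.mem_inter]
    tauto

set_option maxHeartbeats 1000000 in
/-- flip composition 1 -/
lemma compc_sup_negc_flipc (α : Cube n) (D E : Finset (Fin n)) :
    compc (flipc α E ⊔ α) (negc (flipc α D)) = flipc α (E \ D) := by
  apply Cube.ext <;>
  · ext i
    have hαi : i ∈ α.pos → i ∉ α.neg := fun h => Finset.disjoint_left.mp α.disj h
    simp only [compc, flipc, negc, sup_pos', sup_neg', suppc,
      Finset.mem_union, Finset.mem_sdiff, Finset.mem_inter]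
    by_cases h1 : i ∈ α.pos <;> by_cases h2 : i ∈ α.neg <;>
      by_cases h3 : i ∈ D <;> by_cases h4 : i ∈ E <;> tauto

set_option maxHeartbeats 1000000 in
/-- flip composition 2 -/
lemma compc_sup_flipc_negc (α : Cube n) (D E : Finset (Fin n)) :
    compc (flipc α D ⊔ flipc α E) (negc α) = flipc α (D ∪ E) := by
  apply Cube.ext <;>
  · ext i
    have hαi : i ∈ α.pos → i ∉ α.neg := fun h => Finset.disjoint_left.mp α.disj h
    simp only [compc, flipc, negc, sup_pos', sup_neg', suppc,
      Finset.mem_union, Finset.mem_sdiff, Finset.mem_inter]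
    by_cases h1 : i ∈ α.pos <;> by_cases h2 : i ∈ α.neg <;>
      by_cases h3 : i ∈ D <;> by_cases h4 : i ∈ E <;> tauto

/-- I3: the symmetric-difference construction -/
lemma flipc_symmDiff (α : Cube n) (D E : Finset (Fin n)) :
    compc (compc (flipc α E ⊔ α) (negc (flipc α D)) ⊔
      compc (flipc α D ⊔ α) (negc (flipc α E))) (negc α) = flipc α (D ∆ E) := by
  rw [compc_sup_negc_flipc, compc_sup_negc_flipc, compc_sup_flipc_negc]
  congr 1
  rw [symmDiff_def, Finset.sup_eq_union, Finset.union_comm]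

/-- I4 -/
lemma suppc_flipc_sup_self (α : Cube n) (D : Finset (Fin n)) :
    suppc (flipc α D ⊔ α) = suppc α \ D := by
  ext i
  have hαi : i ∈ α.pos → i ∉ α.neg := fun h => Finset.disjoint_left.mp α.disj h
  simp only [suppc, flipc, sup_pos', sup_neg', Finset.mem_union, Finset.mem_sdiff,
    Finset.mem_inter]
  tauto

/-- I5 -/
lemma suppc_flipc_sup_negc (α : Cube n) {D : Finset (Fin n)} (hD : D ⊆ suppc α) :
    suppc (flipc α D ⊔ negc α) = D := by
  ext i
  have hαi : i ∈ α.pos → i ∉ α.neg := fun h => Finset.disjoint_left.mp α.disj h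
  have hDi : i ∈ D → i ∈ α.pos ∨ i ∈ α.neg := by
    intro h; have := hD h; simpa [suppc] using this
  simp only [suppc, flipc, negc, sup_pos', sup_neg', Finset.mem_union, Finset.mem_sdiff,
    Finset.mem_inter]
  tauto

/-- I6: restriction -/
lemma eq_flipc_sup_flipc {x α : Cube n} (hsub : suppc x ⊆ suppc α) :
    x = flipc α (sepc x α) ⊔ flipc α (sepc x α ∪ (suppc α \ suppc x)) := by
  apply Cube.ext <;>
  · ext i
    have hxi : i ∈ x.pos → i ∉ x.neg := fun h => Finset.disjoint_left.mp x.disj h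
    have hαi : i ∈ α.pos → i ∉ α.neg := fun h => Finset.disjoint_left.mp α.disj h
    have h1 : i ∈ x.pos ∪ x.neg → i ∈ α.pos ∪ α.neg := fun h => hsub h
    simp only [Finset.mem_union] at h1
    simp only [flipc, sepc, suppc, sup_pos', sup_neg', Finset.mem_union,
      Finset.mem_sdiff, Finset.mem_inter]
    tauto

end Cube
namespace Cube
variable {n : ℕ}

/-- The set of supports of elements of `A`. -/
def SuppSet (A : Set (Cube n)) : Set (Finset (Fin n)) := (fun x => suppc x) '' A

section Min
variable {A : Set (Cube n)} {α : Cube n}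
variable (hA : IsMRSub A) (hα : α ∈ A ∧ ∀ b ∈ A, b ≤ α → b = α)

include hA hα

lemma suppc_subset_of_mem {x : Cube n} (hx : x ∈ A) : suppc x ⊆ suppc α := by
  have h := mem_caret hA hα.1 hx
  have hle : compc α (negc x) ≤ α :=
    ⟨Finset.subset_union_left, Finset.subset_union_left⟩
  have heq := hα.2 _ h hle
  intro i hi
  simp only [suppc, Finset.mem_union] at hi ⊢
  by_contra hcon
  push_neg at hcon
  rcases hi with hi | hi
  · have : i ∈ (compc α (negc x)).neg := by
      simp only [compc, negc, suppc, Finset.mem_union, Finset.mem_sdiff]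
      tauto
    rw [heq] at this
    exact hcon.2 this
  · have : i ∈ (compc α (negc x)).pos := by
      simp only [compc, negc, suppc, Finset.mem_union, Finset.mem_sdiff]
      tauto
    rw [heq] at this
    exact hcon.1 this

lemma mem_suppset_subset {K : Finset (Fin n)} (hK : K ∈ SuppSet A) : K ⊆ suppc α := by
  obtain ⟨x, hx, rfl⟩ := hK
  exact suppc_subset_of_mem hA hα hx

/-- `Good`: flip of `α` along `D` lies in `A` -/
lemma good_sep {x : Cube n} (hx : x ∈ A) : flipc α (sepc x α) ∈ A := by
  rw [← compc_eq_flipc (suppc_subset_of_mem hA hα hx)]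
  exact mem_compc hA hx hα.1

lemma good_sep_union {x : Cube n} (hx : x ∈ A) :
    flipc α (sepc x α ∪ (suppc α \ suppc x)) ∈ A := by
  rw [← delta_compc_eq_flipc (suppc_subset_of_mem hA hα hx)]
  exact hA.2.2.1 x hx _ (mem_compc hA hx hα.1)
    ⟨Finset.subset_union_left, Finset.subset_union_left⟩

lemma good_symmDiff {D E : Finset (Fin n)} (hD : flipc α D ∈ A) (hE : flipc α E ∈ A) :
    flipc α (D ∆ E) ∈ A := by
  rw [← flipc_symmDiff]
  have hr1 := mem_caret hA (hA.2.1 _ hE _ hα.1) hD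
  have hr2 := mem_caret hA (hA.2.1 _ hD _ hα.1) hE
  exact mem_caret hA (hA.2.1 _ hr1 _ hr2) hα.1

lemma good_empty : flipc α (∅ : Finset (Fin n)) ∈ A := by
  rw [flipc_empty]; exact hα.1

/-- complement of a good set, within the support of α, is a support -/
lemma suppset_of_good {D : Finset (Fin n)} (hD : flipc α D ∈ A) :
    suppc α \ D ∈ SuppSet A :=
  ⟨flipc α D ⊔ α, hA.2.1 _ hD _ hα.1, suppc_flipc_sup_self α D⟩

/-- complement of a support is good -/
lemma good_of_suppset {K : Finset (Fin n)} (hK : K ∈ SuppSet A) :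
    flipc α (suppc α \ K) ∈ A := by
  obtain ⟨x, hx, rfl⟩ := hK
  have h1 := good_sep hA hα hx
  have h2 := good_sep_union hA hα hx
  have h3 := good_symmDiff hA hα h1 h2
  have : sepc x α ∆ (sepc x α ∪ (suppc α \ suppc x)) = suppc α \ suppc x := by
    have hs := sepc_subset x α
    have hs2 := suppc_subset_of_mem hA hα hx
    ext i
    have h4 : i ∈ sepc x α → i ∈ suppc x := fun h => hs h
    simp only [Finset.mem_symmDiff, Finset.mem_union, Finset.mem_sdiff]
    tauto
  rwa [this] at h3

lemma good_supp : flipc α (suppc α) ∈ A := by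
  have h := good_of_suppset hA hα (⟨⊤, hA.1, by simp [suppc, top_pos', top_neg']⟩ :
    (∅:Finset (Fin n)) ∈ SuppSet A)
  rwa [Finset.sdiff_empty] at h

lemma good_compl {D : Finset (Fin n)} (hD : flipc α D ∈ A) (hDs : D ⊆ suppc α) :
    flipc α (suppc α \ D) ∈ A := by
  have h := good_symmDiff hA hα hD (good_supp hA hα)
  have : D ∆ suppc α = suppc α \ D := by
    ext i
    have : i ∈ D → i ∈ suppc α := fun h => hDs h
    simp only [Finset.mem_symmDiff, Finset.mem_sdiff]
    tauto
  rwa [this] at h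

/-- Good sets are exactly supports. -/
lemma good_iff_suppset {D : Finset (Fin n)} (hDs : D ⊆ suppc α) :
    flipc α D ∈ A ↔ D ∈ SuppSet A := by
  constructor
  · intro hD
    refine ⟨flipc α D ⊔ negc α, ?_, suppc_flipc_sup_negc α hDs⟩
    have := hA.2.1 _ hD _ (mem_negc hA hα.1)
    exact this
  · intro hK
    have h := good_of_suppset hA hα hK
    have h2 := good_compl hA hα h Finset.sdiff_subset
    have heq : suppc α \ (suppc α \ D) = D := by
      ext i
      have h1 : i ∈ D → i ∈ suppc α := fun h => hDs h
      simp only [Finset.mem_sdiff]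
      tauto
    rwa [heq] at h2

lemma union_mem_suppset {K L : Finset (Fin n)} (hK : K ∈ SuppSet A)
    (hL : L ∈ SuppSet A) : K ∪ L ∈ SuppSet A := by
  obtain ⟨x, hx, rfl⟩ := hK
  obtain ⟨y, hy, rfl⟩ := hL
  exact ⟨compc x y, mem_compc hA hx hy, suppc_compc x y⟩

lemma symmDiff_mem_suppset {K L : Finset (Fin n)} (hK : K ∈ SuppSet A)
    (hL : L ∈ SuppSet A) : K ∆ L ∈ SuppSet A := by
  rw [← good_iff_suppset hA hα (by
    intro i hi
    rw [Finset.mem_symmDiff] at hi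
    have h1 := mem_suppset_subset hA hα hK
    have h2 := mem_suppset_subset hA hα hL
    rcases hi with ⟨h, _⟩ | ⟨h, _⟩
    exacts [h1 h, h2 h])]
  exact good_symmDiff hA hα
    ((good_iff_suppset hA hα (mem_suppset_subset hA hα hK)).mpr hK)
    ((good_iff_suppset hA hα (mem_suppset_subset hA hα hL)).mpr hL)

lemma compl_mem_suppset {K : Finset (Fin n)} (hK : K ∈ SuppSet A) :
    suppc α \ K ∈ SuppSet A :=
  suppset_of_good hA hα ((good_iff_suppset hA hα (mem_suppset_subset hA hα hK)).mpr hK)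

lemma inter_mem_suppset {K L : Finset (Fin n)} (hK : K ∈ SuppSet A)
    (hL : L ∈ SuppSet A) : K ∩ L ∈ SuppSet A := by
  have h := compl_mem_suppset hA hα
    (union_mem_suppset hA hα (compl_mem_suppset hA hα hK) (compl_mem_suppset hA hα hL))
  have hKs := mem_suppset_subset hA hα hK
  have hLs := mem_suppset_subset hA hα hL
  have : suppc α \ ((suppc α \ K) ∪ (suppc α \ L)) = K ∩ L := by
    ext i
    have h1 : i ∈ K → i ∈ suppc α := fun h => hKs h
    have h2 : i ∈ L → i ∈ suppc α := fun h => hLs h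
    simp only [Finset.mem_sdiff, Finset.mem_union, Finset.mem_inter]
    tauto
  rwa [this] at h

lemma sdiff_mem_suppset {K L : Finset (Fin n)} (hK : K ∈ SuppSet A)
    (hL : L ∈ SuppSet A) : K \ L ∈ SuppSet A := by
  have h := inter_mem_suppset hA hα hK (compl_mem_suppset hA hα hL)
  have hKs := mem_suppset_subset hA hα hK
  have : K ∩ (suppc α \ L) = K \ L := by
    ext i
    have h1 : i ∈ K → i ∈ suppc α := fun h => hKs h
    simp only [Finset.mem_sdiff, Finset.mem_inter]
    tauto
  rwa [this] at h

lemma sep_mem_suppset {x : Cube n} (hx : x ∈ A) : sepc x α ∈ SuppSet A := by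
  rw [← good_iff_suppset hA hα ((sepc_subset x α).trans (suppc_subset_of_mem hA hα hx))]
  exact good_sep hA hα hx

/-- The membership criterion. -/
lemma mem_of_suppset {x : Cube n} (hsupp : suppc x ∈ SuppSet A)
    (hsep : sepc x α ∈ SuppSet A) : x ∈ A := by
  have hsx : suppc x ⊆ suppc α := mem_suppset_subset hA hα hsupp
  have hssep : sepc x α ⊆ suppc α := (sepc_subset x α).trans hsx
  have h1 : flipc α (sepc x α) ∈ A := (good_iff_suppset hA hα hssep).mpr hsep
  have h2 : flipc α (sepc x α ∪ (suppc α \ suppc x)) ∈ A := by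
    rw [good_iff_suppset hA hα (by
      intro i hi
      rw [Finset.mem_union] at hi
      rcases hi with h | h
      exacts [hssep h, Finset.mem_sdiff.mp h |>.1])]
    exact union_mem_suppset hA hα hsep (compl_mem_suppset hA hα hsupp)
  rw [eq_flipc_sup_flipc hsx]
  exact hA.2.1 _ h1 _ h2

end Min
end Cube
namespace Cube
variable {n : ℕ}

lemma suppc_betav {v : Cube n} (hv : v.pos ∪ v.neg = Finset.univ) (x : Cube n) :
    suppc (betav v x) = suppc x := by
  ext i
  have hvi : i ∈ v.pos ∪ v.neg := hv ▸ Finset.mem_univ i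
  rw [Finset.mem_union] at hvi
  simp only [suppc, betav, Finset.mem_union, Finset.mem_inter]
  tauto

lemma betav_eq_of_suppc_eq {v x y : Cube n} (h : suppc x = suppc y) :
    betav v x = betav v y := by
  apply Cube.ext <;> simp only [betav]
  · rw [show x.pos ∪ x.neg = y.pos ∪ y.neg from h]
  · rw [show x.pos ∪ x.neg = y.pos ∪ y.neg from h]

lemma betav_self {v b : Cube n} (hp : b.pos ⊆ v.pos) (hn : b.neg ⊆ v.neg) :
    betav v b = b := by
  have hvd := Finset.disjoint_left.mp v.disj
  apply Cube.ext <;>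
  · ext i
    have h1 : i ∈ b.pos → i ∈ v.pos := fun h => hp h
    have h2 : i ∈ b.neg → i ∈ v.neg := fun h => hn h
    have h3 : i ∈ v.pos → i ∉ v.neg := fun h => hvd h
    simp only [betav, Finset.mem_union, Finset.mem_inter]
    tauto

lemma suppset_mono {v : Cube n} (hv : v.pos ∪ v.neg = Finset.univ)
    {A₁ A₂ : Set (Cube n)} (hB : betav v '' A₁ ⊆ betav v '' A₂) :
    SuppSet A₁ ⊆ SuppSet A₂ := by
  rintro K ⟨x, hx, rfl⟩
  obtain ⟨y, hy, hyx⟩ := hB ⟨x, hx, rfl⟩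
  refine ⟨y, hy, ?_⟩
  have := congrArg suppc hyx
  rwa [suppc_betav hv, suppc_betav hv] at this

lemma min_betav {v : Cube n} (hv : v.pos ∪ v.neg = Finset.univ)
    {A : Set (Cube n)} {α a : Cube n}
    (hA : IsMRSub A) (hα : α ∈ A ∧ ∀ b ∈ A, b ≤ α → b = α)
    (ha : a ∈ betav v '' A ∧ ∀ b ∈ betav v '' A, a ≤ b) :
    a = betav v α := by
  obtain ⟨x, hx, rfl⟩ := ha.1
  apply betav_eq_of_suppc_eq
  apply subset_antisymm (suppc_subset_of_mem hA hα hx)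
  have hle := ha.2 (betav v α) ⟨α, hα.1, rfl⟩
  have h1 : suppc (betav v α) ⊆ suppc (betav v x) :=
    Finset.union_subset (hle.1.trans Finset.subset_union_left)
      (hle.2.trans Finset.subset_union_right)
  rwa [suppc_betav hv, suppc_betav hv] at h1

lemma bsum_pos_subset {v α₁ α₂ : Cube n} :
    (bsum (betav v α₁) (v ⊔ α₁) (v ⊔ α₂)).pos ⊆ v.pos :=
  Finset.sdiff_subset.trans Finset.inter_subset_right

lemma bsum_neg_subset {v α₁ α₂ : Cube n} :
    (bsum (betav v α₁) (v ⊔ α₁) (v ⊔ α₂)).neg ⊆ v.neg :=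
  Finset.sdiff_subset.trans Finset.inter_subset_right

set_option maxHeartbeats 2000000 in
lemma suppc_bsum {v α₁ α₂ : Cube n} (hv : v.pos ∪ v.neg = Finset.univ)
    (h12 : suppc α₁ ⊆ suppc α₂) :
    suppc (bsum (betav v α₁) (v ⊔ α₁) (v ⊔ α₂)) = suppc α₁ \ sepc α₁ α₂ := by
  ext i
  have hvi : i ∈ v.pos ∪ v.neg := hv ▸ Finset.mem_univ i
  rw [Finset.mem_union] at hvi
  have hvd : i ∈ v.pos → i ∉ v.neg := fun h => Finset.disjoint_left.mp v.disj h
  have h1d : i ∈ α₁.pos → i ∉ α₁.neg := fun h => Finset.disjoint_left.mp α₁.disj h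
  have h2d : i ∈ α₂.pos → i ∉ α₂.neg := fun h => Finset.disjoint_left.mp α₂.disj h
  have h12i : i ∈ α₁.pos ∪ α₁.neg → i ∈ α₂.pos ∪ α₂.neg := fun h => h12 h
  rw [Finset.mem_union, Finset.mem_union] at h12i
  simp only [suppc, bsum, betav, sepc, sup_pos', sup_neg', Finset.mem_union,
    Finset.mem_inter, Finset.mem_sdiff, Finset.mem_symmDiff]
  by_cases hp : i ∈ α₁.pos <;> by_cases hq : i ∈ α₁.neg <;>
    by_cases hr : i ∈ v.pos <;> tauto

/-- if suppc y = suppc α₁ \ sepc α₁ α₂ then bsum is betav of y -/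
lemma bsum_eq_betav {v α₁ α₂ y : Cube n} (hv : v.pos ∪ v.neg = Finset.univ)
    (h12 : suppc α₁ ⊆ suppc α₂) (hy : suppc y = suppc α₁ \ sepc α₁ α₂) :
    bsum (betav v α₁) (v ⊔ α₁) (v ⊔ α₂) = betav v y := by
  have h1 : betav v (bsum (betav v α₁) (v ⊔ α₁) (v ⊔ α₂)) =
      bsum (betav v α₁) (v ⊔ α₁) (v ⊔ α₂) :=
    betav_self bsum_pos_subset bsum_neg_subset
  rw [← h1]
  exact betav_eq_of_suppc_eq (by rw [suppc_bsum hv h12, hy])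

set_option maxHeartbeats 2000000 in
/-- triangle identity for separation sets -/
lemma sepc_triangle {x α₁ α₂ : Cube n} (hx1 : suppc x ⊆ suppc α₁)
    (h12 : suppc α₁ ⊆ suppc α₂) :
    sepc x α₂ = sepc x α₁ ∆ (sepc α₁ α₂ ∩ suppc x) := by
  ext i
  have hxd : i ∈ x.pos → i ∉ x.neg := fun h => Finset.disjoint_left.mp x.disj h
  have h1d : i ∈ α₁.pos → i ∉ α₁.neg := fun h => Finset.disjoint_left.mp α₁.disj h
  have h2d : i ∈ α₂.pos → i ∉ α₂.neg := fun h => Finset.disjoint_left.mp α₂.disj h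
  have hx1i : i ∈ x.pos ∪ x.neg → i ∈ α₁.pos ∪ α₁.neg := fun h => hx1 h
  have h12i : i ∈ α₁.pos ∪ α₁.neg → i ∈ α₂.pos ∪ α₂.neg := fun h => h12 h
  rw [Finset.mem_union, Finset.mem_union] at hx1i h12i
  simp only [sepc, suppc, Finset.mem_union, Finset.mem_inter, Finset.mem_symmDiff]
  by_cases hp : i ∈ x.pos <;> by_cases hq : i ∈ x.neg <;>
    by_cases hr : i ∈ α₁.pos <;> tauto

end Cube
/-- Locator pairs detect inclusion of MR-subalgebras:
`A₁ ⊆ A₂ iff B₁ ⊆ B₂ and c₁ +_{a₁} c₂ ∈ B₂`. -/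
theorem locator_le_iff (n : ℕ) (v : Cube n) (hv : v.pos ∪ v.neg = Finset.univ)
    (A₁ A₂ : Set (Cube n)) (hA₁ : Cube.IsMRSub A₁) (hA₂ : Cube.IsMRSub A₂)
    (α₁ α₂ : Cube n)
    (hα₁ : α₁ ∈ A₁ ∧ ∀ b ∈ A₁, b ≤ α₁ → b = α₁)
    (hα₂ : α₂ ∈ A₂ ∧ ∀ b ∈ A₂, b ≤ α₂ → b = α₂)
    (a₁ a₂ : Cube n)
    (ha₁ : a₁ ∈ Cube.betav v '' A₁ ∧ ∀ b ∈ Cube.betav v '' A₁, a₁ ≤ b)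
    (ha₂ : a₂ ∈ Cube.betav v '' A₂ ∧ ∀ b ∈ Cube.betav v '' A₂, a₂ ≤ b) :
    A₁ ⊆ A₂ ↔
      (Cube.betav v '' A₁ ⊆ Cube.betav v '' A₂ ∧
        Cube.bsum a₁ (v ⊔ α₁) (v ⊔ α₂) ∈ Cube.betav v '' A₂) := by
  open Cube in
  constructor
  · intro h
    have hS12 : suppc α₁ ⊆ suppc α₂ := suppc_subset_of_mem hA₂ hα₂ (h hα₁.1)
    refine ⟨Set.image_mono h, ?_⟩
    have hM : suppc α₁ \ sepc α₁ α₂ ∈ SuppSet A₂ :=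
      sdiff_mem_suppset hA₂ hα₂ ⟨α₁, h hα₁.1, rfl⟩
        (sep_mem_suppset hA₂ hα₂ (h hα₁.1))
    obtain ⟨y, hy, hysupp⟩ := hM
    rw [min_betav hv hA₁ hα₁ ha₁, bsum_eq_betav hv hS12 hysupp]
    exact ⟨y, hy, rfl⟩
  · rintro ⟨hB, hbs⟩
    have hSS : SuppSet A₁ ⊆ SuppSet A₂ := suppset_mono hv hB
    have hS12 : suppc α₁ ⊆ suppc α₂ :=
      mem_suppset_subset hA₂ hα₂ (hSS ⟨α₁, hα₁.1, rfl⟩)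
    obtain ⟨z, hz, hzeq⟩ := hbs
    have hzsupp : suppc z = suppc α₁ \ sepc α₁ α₂ := by
      have h2 := congrArg suppc hzeq
      rw [min_betav hv hA₁ hα₁ ha₁] at h2
      rwa [suppc_betav hv, suppc_bsum hv hS12] at h2
    have hsep12 : sepc α₁ α₂ ∈ SuppSet A₂ := by
      have h1 := sdiff_mem_suppset hA₂ hα₂ (hSS ⟨α₁, hα₁.1, rfl⟩) ⟨z, hz, hzsupp⟩
      have heq : suppc α₁ \ (suppc α₁ \ sepc α₁ α₂) = sepc α₁ α₂ := by
        have hs := sepc_subset α₁ α₂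
        ext i
        have h3 : i ∈ sepc α₁ α₂ → i ∈ suppc α₁ := fun hh => hs hh
        simp only [Finset.mem_sdiff]
        tauto
      rwa [heq] at h1
    intro x hx
    have hx1 : suppc x ⊆ suppc α₁ := suppc_subset_of_mem hA₁ hα₁ hx
    refine mem_of_suppset hA₂ hα₂ (hSS ⟨x, hx, rfl⟩) ?_
    rw [sepc_triangle hx1 hS12]
    exact symmDiff_mem_suppset hA₂ hα₂ (hSS (sep_mem_suppset hA₁ hα₁ hx))
      (inter_mem_suppset hA₂ hα₂ hsep12 (hSS ⟨x, hx, rfl⟩))
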